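/- For all u, v ∈ V one has the Lipschitz bound ‖Au − Av‖_{C[ε,Λ]} ≤ (λ/4)·(1 + ln(Λ/ε))·‖u − v‖_{C[ε,Λ]}, where ‖·‖_{C[ε,Λ]} denotes the supremum norm on [ε,Λ]; in particular the operator A : V → V is continuous. -/

import Mathlib

open Real Set MeasureTheory intervalIntegral

/-- The function `w(x) = (4ε/λ)·√(ε/(Λx))`. -/
noncomputable def wfun (lam ε Λ : ℝ) (x : ℝ) : ℝ :=
  (4 * ε / lam) * Real.sqrt (ε / (Λ * x))

/-- The nonlinear integral operator `A`. -/
noncomputable def opA (lam ε Λ : ℝ) (u : ℝ → ℝ) (x : ℝ) : ℝ :=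
  (lam / 2) * ∫ y in ε..Λ, (1 / (y + x + |y - x|)) * (y * u y / (y + (u y) ^ 2))

/-- Membership in the set `V`: continuous on `[ε,Λ]` and `w(x) ≤ u(x) ≤ (λ/4)√Λ` there. -/
def memV (lam ε Λ : ℝ) (u : ℝ → ℝ) : Prop :=
  ContinuousOn u (Set.Icc ε Λ) ∧
    ∀ x ∈ Set.Icc ε Λ, wfun lam ε Λ x ≤ u x ∧ u x ≤ (lam / 4) * Real.sqrt Λ

/-- The map `t ↦ y t/(y+t²)` is 1-Lipschitz for `y > 0`. -/
lemma aux_key (y a b : ℝ) (hy : 0 < y) :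
    |y * a / (y + a ^ 2) - y * b / (y + b ^ 2)| ≤ |a - b| := by
  have ha : 0 < y + a ^ 2 := by positivity
  have hb : 0 < y + b ^ 2 := by positivity
  have hdiff : y * a / (y + a ^ 2) - y * b / (y + b ^ 2)
      = y * (a - b) * (y - a * b) / ((y + a ^ 2) * (y + b ^ 2)) := by
    field_simp; ring
  rw [hdiff, abs_div, abs_of_pos (mul_pos ha hb), abs_mul, abs_mul,
    abs_of_pos hy, div_le_iff₀ (mul_pos ha hb)]
  have h2 : y * |y - a * b| ≤ (y + a ^ 2) * (y + b ^ 2) := by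
    rcases abs_cases (y - a * b) with ⟨h, _⟩ | ⟨h, _⟩ <;> rw [h] <;>
      nlinarith [sq_nonneg (a + b), sq_nonneg (a - b), sq_nonneg (a * b), hy.le]
  nlinarith [abs_nonneg (a - b), abs_nonneg (y - a * b), hy.le]

lemma aux_cont (ε Λ x : ℝ) (hε : 0 < ε) (hεx : ε ≤ x) (u : ℝ → ℝ)
    (hu : ContinuousOn u (Set.Icc ε Λ)) :
    ContinuousOn (fun y => (1 / (y + x + |y - x|)) * (y * u y / (y + (u y) ^ 2)))
      (Set.Icc ε Λ) := by
  apply ContinuousOn.mul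
  · apply ContinuousOn.div continuousOn_const
    · exact ((continuous_id.add continuous_const).add
        ((continuous_id.sub continuous_const).abs)).continuousOn
    · intro y hy
      exact ne_of_gt (by linarith [abs_nonneg (y - x), hy.1])
  · apply ContinuousOn.div
    · exact continuousOn_id.mul hu
    · exact continuousOn_id.add (hu.pow 2)
    · intro y hy
      have h2 : ε ≤ y := hy.1
      nlinarith [sq_nonneg (u y)]

theorem stmt_7 (ε Λ lam : ℝ) (hε : 0 < ε) (hεΛ : ε < Λ) (hlam : 2 < lam)
    (hratio : ε / Λ ≤ min (1 / 16)
      (((Real.sqrt (lam ^ 2 + 128 * (lam - 2)) - lam) / 64) ^ 2))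
    (u v : ℝ → ℝ) (hu : memV lam ε Λ u) (hv : memV lam ε Λ v) :
    sSup ((fun x => |opA lam ε Λ u x - opA lam ε Λ v x|) '' Set.Icc ε Λ) ≤
      (lam / 4) * (1 + Real.log (Λ / ε)) *
        sSup ((fun x => |u x - v x|) '' Set.Icc ε Λ) := by
  have hΛ : 0 < Λ := hε.trans hεΛ
  have hεΛ' : ε ≤ Λ := hεΛ.le
  set M := sSup ((fun x => |u x - v x|) '' Set.Icc ε Λ) with hMdef
  have hcont_uv : ContinuousOn (fun x => |u x - v x|) (Set.Icc ε Λ) :=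
    (hu.1.sub hv.1).abs
  have hbdd : BddAbove ((fun x => |u x - v x|) '' Set.Icc ε Λ) :=
    (isCompact_Icc.image_of_continuousOn hcont_uv).bddAbove
  have hM0 : 0 ≤ M :=
    Real.sSup_nonneg (by rintro _ ⟨y, hy, rfl⟩; exact abs_nonneg _)
  have hMle : ∀ y ∈ Set.Icc ε Λ, |u y - v y| ≤ M := fun y hy =>
    le_csSup hbdd ⟨y, hy, rfl⟩
  have hlog0 : 0 ≤ Real.log (Λ / ε) :=
    Real.log_nonneg (by rw [le_div_iff₀ hε]; linarith)
  have hRHS0 : 0 ≤ lam / 4 * (1 + Real.log (Λ / ε)) * M :=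
    mul_nonneg (mul_nonneg (by linarith) (by linarith)) hM0
  apply Real.sSup_le _ hRHS0
  rintro _ ⟨x, hx, rfl⟩
  obtain ⟨hx1, hx2⟩ := hx
  have hx0 : 0 < x := lt_of_lt_of_le hε hx1
  set g1 : ℝ → ℝ :=
    fun y => (1 / (y + x + |y - x|)) * (y * u y / (y + (u y) ^ 2)) with hg1
  set g2 : ℝ → ℝ :=
    fun y => (1 / (y + x + |y - x|)) * (y * v y / (y + (v y) ^ 2)) with hg2
  have hcg1 : ContinuousOn g1 (Set.Icc ε Λ) := aux_cont ε Λ x hε hx1 u hu.1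
  have hcg2 : ContinuousOn g2 (Set.Icc ε Λ) := aux_cont ε Λ x hε hx1 v hv.1
  have huIcc : Set.uIcc ε Λ = Set.Icc ε Λ := Set.uIcc_of_le hεΛ'
  have hint1 : IntervalIntegrable g1 volume ε Λ := by
    apply ContinuousOn.intervalIntegrable; rw [huIcc]; exact hcg1
  have hint2 : IntervalIntegrable g2 volume ε Λ := by
    apply ContinuousOn.intervalIntegrable; rw [huIcc]; exact hcg2
  have hmax : ∀ y : ℝ, y + x + |y - x| = 2 * max x y := by
    intro y
    rcases le_total y x with h | h
    · rw [abs_of_nonpos (by linarith), max_eq_left h]; ring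
    · rw [abs_of_nonneg (by linarith), max_eq_right h]; ring
  set H : ℝ → ℝ := fun y => M / (2 * max x y) with hH
  have hmaxpos : ∀ y : ℝ, 0 < max x y := fun y => lt_max_iff.2 (Or.inl hx0)
  have hcH : Continuous H := by
    apply continuous_const.div (continuous_const.mul (continuous_const.max continuous_id))
    intro y
    have := hmaxpos y
    exact (mul_pos two_pos this).ne'
  have hintH : IntervalIntegrable H volume ε Λ := hcH.intervalIntegrable ε Λ
  have hpt : ∀ y ∈ Set.Icc ε Λ, |g1 y - g2 y| ≤ H y := by
    intro y hy
    have hy0 : 0 < y := lt_of_lt_of_le hε hy.1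
    have hsplit : g1 y - g2 y =
        (1 / (2 * max x y)) * (y * u y / (y + (u y) ^ 2) - y * v y / (y + (v y) ^ 2)) := by
      simp only [hg1, hg2, hmax y]; ring
    have hpos : (0:ℝ) < 1 / (2 * max x y) := by
      have := hmaxpos y; positivity
    rw [hsplit, abs_mul, abs_of_pos hpos]
    calc (1 / (2 * max x y)) * |y * u y / (y + (u y) ^ 2) - y * v y / (y + (v y) ^ 2)|
        ≤ (1 / (2 * max x y)) * |u y - v y| :=
          mul_le_mul_of_nonneg_left (aux_key y (u y) (v y) hy0) hpos.le
      _ ≤ (1 / (2 * max x y)) * M := mul_le_mul_of_nonneg_left (hMle y hy) hpos.le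
      _ = H y := by rw [hH]; ring
  have habs : |∫ y in ε..Λ, (g1 y - g2 y)| ≤ ∫ y in ε..Λ, H y := by
    calc |∫ y in ε..Λ, (g1 y - g2 y)| ≤ ∫ y in ε..Λ, |g1 y - g2 y| :=
          intervalIntegral.abs_integral_le_integral_abs hεΛ'
      _ ≤ ∫ y in ε..Λ, H y := by
          apply intervalIntegral.integral_mono_on hεΛ' (hint1.sub hint2).abs hintH hpt
  have hsplitI : (∫ y in ε..x, H y) + (∫ y in x..Λ, H y) = ∫ y in ε..Λ, H y :=
    intervalIntegral.integral_add_adjacent_intervals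
      (hcH.intervalIntegrable _ _) (hcH.intervalIntegrable _ _)
  have hI1 : (∫ y in ε..x, H y) = (x - ε) * (M / (2 * x)) := by
    have heq : Set.EqOn H (fun _ => M / (2 * x)) (Set.uIcc ε x) := by
      intro y hy
      rw [Set.uIcc_of_le hx1] at hy
      simp only [hH, max_eq_left hy.2]
    rw [intervalIntegral.integral_congr heq, intervalIntegral.integral_const, smul_eq_mul]
  have hI2 : (∫ y in x..Λ, H y) = (M / 2) * Real.log (Λ / x) := by
    have heq : Set.EqOn H (fun y => (M / 2) * (1 / y)) (Set.uIcc x Λ) := by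
      intro y hy
      rw [Set.uIcc_of_le hx2] at hy
      simp only [hH, max_eq_right hy.1]
      ring
    rw [intervalIntegral.integral_congr heq, intervalIntegral.integral_const_mul,
      integral_one_div]
    intro h0
    rw [Set.uIcc_of_le hx2] at h0
    exact absurd h0.1 (not_le.2 hx0)
  have hIle : (∫ y in ε..Λ, H y) ≤ (M / 2) * (1 + Real.log (Λ / ε)) := by
    rw [← hsplitI, hI1, hI2]
    have h1 : (x - ε) * (M / (2 * x)) ≤ M / 2 := by
      have h1a : (x - ε) * (M / (2 * x)) ≤ x * (M / (2 * x)) :=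
        mul_le_mul_of_nonneg_right (by linarith) (by positivity)
      have h1b : x * (M / (2 * x)) = M / 2 := by field_simp
      linarith
    have h2 : Real.log (Λ / x) ≤ Real.log (Λ / ε) := by
      apply Real.log_le_log (by positivity)
      rw [div_le_div_iff₀ hx0 hε]
      nlinarith
    nlinarith [mul_le_mul_of_nonneg_left h2 (by linarith : (0:ℝ) ≤ M / 2)]
  have hA : opA lam ε Λ u x - opA lam ε Λ v x = (lam / 2) * ∫ y in ε..Λ, (g1 y - g2 y) := by
    rw [intervalIntegral.integral_sub hint1 hint2]
    simp only [opA, hg1, hg2]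
    ring
  show |opA lam ε Λ u x - opA lam ε Λ v x| ≤ _
  rw [hA, abs_mul, abs_of_pos (by linarith : (0:ℝ) < lam / 2)]
  calc (lam / 2) * |∫ y in ε..Λ, (g1 y - g2 y)|
      ≤ (lam / 2) * ((M / 2) * (1 + Real.log (Λ / ε))) :=
        mul_le_mul_of_nonneg_left (habs.trans hIle) (by linarith)
    _ = lam / 4 * (1 + Real.log (Λ / ε)) * M := by ring
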